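/- For every nonnegative integer k there exists a unique nonnegative integer d such that d² + d ≤ 2k ≤ d² + 3d, and for every real number a > 0 one has N_k(a,a) = d·a. -/

import Mathlib

open Filter

/-- `ellN a b k` is the `(k+1)`-st smallest element (with multiplicity) of
`{a*m + b*n : m, n ∈ ℤ≥0}`: the smallest `L ≥ 0` such that at least `k+1` pairs
`(m,n)` of nonnegative integers satisfy `a*m + b*n ≤ L`. -/
noncomputable def ellN (a b : ℝ) (k : ℕ) : ℝ :=
  sInf {L : ℝ | 0 ≤ L ∧ k + 1 ≤ {p : ℕ × ℕ | a * p.1 + b * p.2 ≤ L}.ncard}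

lemma card_tri (t : ℕ) : ({p : ℕ × ℕ | p.1 + p.2 ≤ t}).ncard * 2 = (t+1)*(t+2) := by
  have hset : {p : ℕ × ℕ | p.1 + p.2 ≤ t}
      = ↑((Finset.range (t+1)).biUnion (fun n => Finset.HasAntidiagonal.antidiagonal n)) := by
    ext p
    simp only [Finset.coe_biUnion, Finset.mem_coe, Finset.mem_range, Set.mem_iUnion,
      Finset.HasAntidiagonal.mem_antidiagonal, Set.mem_setOf_eq, Nat.lt_succ_iff]
    constructor
    · intro h; exact ⟨p.1 + p.2, h, rfl⟩
    · rintro ⟨n, hn, rfl⟩; exact hn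
  rw [hset, Set.ncard_coe_finset]
  rw [Finset.card_biUnion]
  · have h1 : ∑ n ∈ Finset.range (t+1), (Finset.HasAntidiagonal.antidiagonal n).card
        = ∑ n ∈ Finset.range (t+1), (n+1) := by
      simp [Finset.Nat.card_antidiagonal]
    rw [h1]
    have h2 : ∑ n ∈ Finset.range (t+1), (n+1) = ∑ n ∈ Finset.range (t+2), n := by
      rw [Finset.sum_range_succ' (fun n => n) (t+1)]
      simp
    rw [h2, Finset.sum_range_id_mul_two]
    simp [Nat.succ_sub_one]
    ring
  · intro x _ y _ hxy
    simp only [Finset.disjoint_left]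
    intro p hp hq
    rw [Finset.HasAntidiagonal.mem_antidiagonal] at hp hq
    exact hxy (hp ▸ hq ▸ rfl)

lemma set_eq (a : ℝ) (ha : 0 < a) (L : ℝ) (hL : 0 ≤ L) :
    {p : ℕ × ℕ | a * p.1 + a * p.2 ≤ L} = {p : ℕ × ℕ | p.1 + p.2 ≤ ⌊L/a⌋₊} := by
  ext p
  simp only [Set.mem_setOf_eq]
  rw [Nat.le_floor_iff (by positivity), le_div_iff₀ ha]
  constructor
  · intro h; push_cast; linarith
  · intro h; push_cast at h; linarith

lemma exist_d (k : ℕ) : ∃ d : ℕ, d ^ 2 + d ≤ 2 * k ∧ 2 * k ≤ d ^ 2 + 3 * d := by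
  induction k with
  | zero => exact ⟨0, by norm_num⟩
  | succ n ih =>
    obtain ⟨d, hd1, hd2⟩ := ih
    by_cases h : 2 * (n+1) ≤ d ^ 2 + 3 * d
    · exact ⟨d, by omega, h⟩
    · have hpar : Even (d ^ 2 + 3 * d) := by
        rcases Nat.even_or_odd d with he | ho
        · obtain ⟨c, rfl⟩ := he; exact ⟨2*c^2+3*c, by ring⟩
        · obtain ⟨c, rfl⟩ := ho; exact ⟨2*c^2+5*c+2, by ring⟩
      obtain ⟨c, hc⟩ := hpar
      have h2n : 2 * n = d ^ 2 + 3 * d := by omega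
      exact ⟨d+1, by nlinarith, by nlinarith⟩

theorem stmt_0 (k : ℕ) :
    (∃! d : ℕ, d ^ 2 + d ≤ 2 * k ∧ 2 * k ≤ d ^ 2 + 3 * d) ∧
      ∀ d : ℕ, (d ^ 2 + d ≤ 2 * k ∧ 2 * k ≤ d ^ 2 + 3 * d) →
        ∀ a : ℝ, 0 < a → ellN a a k = d * a := by
  have uniq : ∀ d e : ℕ, (d ^ 2 + d ≤ 2 * k ∧ 2 * k ≤ d ^ 2 + 3 * d) →
      (e ^ 2 + e ≤ 2 * k ∧ 2 * k ≤ e ^ 2 + 3 * e) → d = e := by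
    intro d e ⟨hd1, hd2⟩ ⟨he1, he2⟩
    by_contra hne
    rcases Nat.lt_or_ge d e with h | h
    · have hde : d + 1 ≤ e := h
      nlinarith
    · rcases Nat.lt_or_ge e d with h' | h'
      · have hed : e + 1 ≤ d := h'
        nlinarith
      · exact hne (le_antisymm h' h)
  constructor
  · obtain ⟨d, hd⟩ := exist_d k
    exact ⟨d, hd, fun y hy => uniq y d hy hd⟩
  · intro d ⟨hd1, hd2⟩ a ha
    unfold ellN
    apply IsLeast.csInf_eq
    constructor
    · refine ⟨by positivity, ?_⟩
      rw [set_eq a ha _ (by positivity)]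
      have hfl : ⌊(d : ℝ) * a / a⌋₊ = d := by
        rw [mul_div_assoc, div_self ha.ne', mul_one, Nat.floor_natCast]
      rw [hfl]
      have hc := card_tri d
      have hr : (d+1)*(d+2) = d^2 + 3*d + 2 := by ring
      omega
    · rintro L ⟨hL0, hL⟩
      rw [set_eq a ha L hL0] at hL
      set t := ⌊L/a⌋₊ with ht
      have hc := card_tri t
      have hdt : d ≤ t := by
        by_contra hlt
        have h1 : t + 1 ≤ d := by omega
        have h2 : (t+1)*(t+2) ≤ d*(d+1) := Nat.mul_le_mul h1 (by omega)
        have h3 : d*(d+1) = d^2 + d := by ring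
        omega
      have hda : (d : ℝ) ≤ L / a :=
        le_trans (by exact_mod_cast hdt) (Nat.floor_le (by positivity))
      calc (d:ℝ) * a ≤ (L/a) * a := by nlinarith
        _ = L := by field_simp
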